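/- Let R be a principal Artinian local ring of length k with maximal ideal 𝔪, and consider a bipartite module graph over R. Suppose there is a core vertex v₀ such that for every vertex v there exists a surjective path from v₀ to v. Then for every global section s there exists an integer δ with 0 ≤ δ ≤ k such that R·s(v) = 𝔪^δ·S(v) for every vertex v; in particular, the global section s is uniquely determined by its value s(v₀) at the core vertex v₀. -/

import Mathlib

section Aux

variable {R : Type*} [CommRing R] [IsLocalRing R] [IsArtinianRing R]

open IsLocalRing

/-- The maximal ideal power chain gives a length bound. -/
lemma aux_pow_max_eq_bot (k : ℕ)
    (hk : (Order.krullDim (Submodule R R)).unbotD 0 = (k : ℕ∞)) :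
    (maximalIdeal R) ^ k = ⊥ := by
  classical
  obtain ⟨n, hn⟩ : IsNilpotent (maximalIdeal R) := by
    have := IsArtinianRing.isNilpotent_jacobson_bot (R := R)
    rwa [jacobson_eq_maximalIdeal ⊥ bot_ne_top] at this
  -- m = least exponent killing the maximal ideal
  have hexm : ∃ n, (maximalIdeal R) ^ n = ⊥ := ⟨n, hn⟩
  set m := Nat.find hexm with hm
  have hmzero : (maximalIdeal R) ^ m = ⊥ := Nat.find_spec hexm
  have hstrict : ∀ j < m, (maximalIdeal R) ^ (j + 1) < (maximalIdeal R) ^ j := by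
    intro j hj
    refine lt_of_le_of_ne (Ideal.pow_le_pow_right (Nat.le_succ j)) ?_
    intro heq
    have hall : ∀ i, j ≤ i → (maximalIdeal R) ^ i = (maximalIdeal R) ^ j := by
      intro i hi
      induction i with
      | zero => simp [Nat.le_zero.mp hi]
      | succ i ih =>
        rcases Nat.lt_or_ge j (i + 1) with h | h
        · have hji : j ≤ i := by omega
          have := ih hji
          calc (maximalIdeal R) ^ (i + 1) = maximalIdeal R * (maximalIdeal R) ^ i := by
                rw [pow_succ, mul_comm]
            _ = maximalIdeal R * (maximalIdeal R) ^ j := by rw [this]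
            _ = (maximalIdeal R) ^ (j + 1) := by rw [pow_succ, mul_comm]
            _ = (maximalIdeal R) ^ j := heq
        · have hji : j = i + 1 := by omega
          rw [hji]
    have : (maximalIdeal R) ^ j = ⊥ := by
      rw [← hall m (le_of_lt hj), hmzero]
    have hle : m ≤ j := by rw [hm]; exact Nat.find_le this
    omega
  -- build an LTSeries of length m in Submodule R R
  have hmk : m ≤ k := by
    let p : LTSeries (Submodule R R) :=
      ⟨m, fun i => ((maximalIdeal R) ^ (m - (i : ℕ)) : Ideal R), by
        intro i
        have hi : (i : ℕ) < m := i.isLt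
        show (maximalIdeal R) ^ (m - (i.castSucc : ℕ)) < (maximalIdeal R) ^ (m - (i.succ : ℕ))
        rw [Fin.coe_castSucc, Fin.val_succ]
        have h1 : (m - ((i : ℕ) + 1)) + 1 = m - (i : ℕ) := by omega
        have h2 := hstrict (m - ((i : ℕ) + 1)) (by omega)
        rw [h1] at h2
        exact h2⟩
    have hlen := Order.LTSeries.length_le_krullDim p
    cases hd : Order.krullDim (Submodule R R) with
    | bot => rw [hd] at hlen; simp at hlen
    | coe a =>
      rw [hd] at hlen hk
      rw [WithBot.unbotD_coe] at hk
      rw [hk] at hlen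
      have hlen2 : ((m : ℕ∞) : WithBot ℕ∞) ≤ ((k : ℕ∞) : WithBot ℕ∞) := hlen
      exact_mod_cast hlen2
  have : (maximalIdeal R) ^ k ≤ (maximalIdeal R) ^ m := Ideal.pow_le_pow_right hmk
  rw [hmzero] at this
  exact le_bot_iff.mp this

/-- Every principal ideal of a principal Artinian local ring is a power of the maximal ideal. -/
lemma aux_span_eq_pow (hprin : (maximalIdeal R).IsPrincipal) (k : ℕ)
    (hk : (Order.krullDim (Submodule R R)).unbotD 0 = (k : ℕ∞)) (x : R) :
    ∃ δ : ℕ, δ ≤ k ∧ Ideal.span {x} = (maximalIdeal R) ^ δ := by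
  classical
  have hbot := aux_pow_max_eq_bot k hk
  obtain ⟨π, hπ⟩ := hprin
  rcases eq_or_ne x 0 with rfl | hx
  · exact ⟨k, le_rfl, by simp [hbot]⟩
  · have hxk : x ∉ (maximalIdeal R) ^ k := by
      rw [hbot]; simpa using hx
    have hex : ∃ i, x ∉ (maximalIdeal R) ^ i := ⟨k, hxk⟩
    set n := Nat.find hex with hn
    have hnspec : x ∉ (maximalIdeal R) ^ n := Nat.find_spec hex
    have hn0 : n ≠ 0 := by
      intro h
      apply hnspec
      rw [h, pow_zero, Ideal.one_eq_top]
      exact Submodule.mem_top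
    set δ := n - 1 with hδ
    have hδn : δ + 1 = n := by omega
    have hmem : x ∈ (maximalIdeal R) ^ δ := by
      by_contra h
      have h2 : n ≤ δ := by rw [hn]; exact Nat.find_le h
      omega
    have hδk : δ ≤ k := by
      have : n ≤ k := by rw [hn]; exact Nat.find_le hxk
      omega
    refine ⟨δ, hδk, ?_⟩
    have hπδ : (maximalIdeal R) ^ δ = Ideal.span {π ^ δ} := by
      rw [hπ, Ideal.submodule_span_eq, Ideal.span_singleton_pow]
    rw [hπδ] at hmem
    obtain ⟨a, ha⟩ := Ideal.mem_span_singleton'.mp hmem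
    have haunit : IsUnit a := by
      by_contra hau
      apply hnspec
      rw [← hδn, ← ha, pow_succ, mul_comm a (π ^ δ)]
      exact Ideal.mul_mem_mul (Ideal.pow_mem_pow (hπ ▸ Submodule.mem_span_singleton_self π) δ)
        ((mem_maximalIdeal a).mpr hau)
    rw [← ha, Ideal.span_singleton_mul_left_unit haunit, ← hπδ]

variable {M N : Type*} [AddCommGroup M] [Module R M] [AddCommGroup N] [Module R N]

/-- push span condition through a surjection -/
lemma aux_surj_push (f : M →ₗ[R] N) (hf : Function.Surjective f) (I : Ideal R) (x : M)
    (h : Submodule.span R {x} = I • (⊤ : Submodule R M)) :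
    Submodule.span R {f x} = I • (⊤ : Submodule R N) := by
  have : Submodule.map f (Submodule.span R {x}) = Submodule.span R {f x} := by
    rw [Submodule.map_span, Set.image_singleton]
  rw [← this, h, Submodule.map_smul'', Submodule.map_top, LinearMap.range_eq_top.mpr hf]

/-- pull span condition back through a bijection -/
lemma aux_bij_pull (f : M →ₗ[R] N) (hf : Function.Bijective f) (I : Ideal R) (x : M)
    (h : Submodule.span R {f x} = I • (⊤ : Submodule R N)) :
    Submodule.span R {x} = I • (⊤ : Submodule R M) := by
  let e := LinearEquiv.ofBijective f hf
  have hx : x = e.symm (f x) := by simp [e]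
  rw [hx]
  exact aux_surj_push (e.symm : N →ₗ[R] M) e.symm.surjective I (f x) h

/-- span condition at a core vertex -/
lemma aux_core (hprin : (maximalIdeal R).IsPrincipal) (k : ℕ)
    (hk : (Order.krullDim (Submodule R R)).unbotD 0 = (k : ℕ∞))
    (b : Module.Basis (Fin 1) R M) (x : M) :
    ∃ δ : ℕ, δ ≤ k ∧ Submodule.span R {x} = (maximalIdeal R) ^ δ • (⊤ : Submodule R M) := by
  let e : M ≃ₗ[R] R := b.equivFun ≪≫ₗ LinearEquiv.funUnique (Fin 1) R R
  obtain ⟨δ, hδ, hspan⟩ := aux_span_eq_pow hprin k hk (e x)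
  refine ⟨δ, hδ, ?_⟩
  have h' : Submodule.span R {e x} = (maximalIdeal R) ^ δ • (⊤ : Submodule R R) := by
    rw [Ideal.smul_eq_mul, Ideal.mul_top]; exact hspan
  exact aux_bij_pull (e : M →ₗ[R] R) e.bijective ((maximalIdeal R) ^ δ) x h'
end Aux


/-- The length of a module: the Krull dimension of its lattice of submodules. -/
noncomputable def moduleLength (R M : Type*) [Ring R] [AddCommGroup M] [Module R M] : ℕ∞ :=
  (Order.krullDim (Submodule R M)).unbotD 0

/-- In a bipartite module graph over a principal Artinian local ring `R` of length `k`,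
if there is a core vertex `v₀` admitting a surjective path to every vertex, then any
global section `s` satisfies `R·s(v) = 𝔪^δ·S(v)` for a single integer `0 ≤ δ ≤ k`, and
`s` is determined by its value at `v₀`. -/
theorem global_section_of_stub_sheaf
    {R : Type*} [CommRing R] [IsLocalRing R] [IsArtinianRing R]
    (hprin : (IsLocalRing.maximalIdeal R).IsPrincipal)
    (k : ℕ) (hk : moduleLength R R = (k : ℕ∞))
    {V E : Type*} (even : V → Prop) (vpos vneg : E → V)
    (hpos : ∀ e, even (vpos e)) (hneg : ∀ e, ¬ even (vneg e))
    (SV : V → Type*) [∀ v, AddCommGroup (SV v)] [∀ v, Module R (SV v)]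
    (SE : E → Type*) [∀ e, AddCommGroup (SE e)] [∀ e, Module R (SE e)]
    (hfinV : ∀ v, IsFiniteLength R (SV v))
    (hcycV : ∀ v, ∃ x : SV v, Submodule.span R {x} = ⊤)
    (hfinE : ∀ e, IsFiniteLength R (SE e))
    (hcycE : ∀ e, ∃ x : SE e, Submodule.span R {x} = ⊤)
    (ψpos : ∀ e, SV (vpos e) →ₗ[R] SE e) (ψneg : ∀ e, SV (vneg e) →ₗ[R] SE e)
    (hψpos : ∀ e, Function.Bijective (ψpos e))
    (hψneg : ∀ e, Function.Surjective (ψneg e))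
    -- a core vertex `v₀` with a surjective path to every vertex
    (v₀ : V) (hcore : Nonempty (Module.Basis (Fin 1) R (SV v₀)))
    (hpath : ∀ v : V, ∃ (r : ℕ) (vv : Fin (r + 1) → V) (ee : Fin r → E),
      vv 0 = v₀ ∧ vv (Fin.last r) = v ∧
      (∀ i : Fin r,
        (vpos (ee i) = vv i.castSucc ∧ vneg (ee i) = vv i.succ) ∨
        (vpos (ee i) = vv i.succ ∧ vneg (ee i) = vv i.castSucc)) ∧
      (∀ i : Fin r,
        (vpos (ee i) = vv i.succ → Function.Bijective (ψpos (ee i))) ∧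
        (vneg (ee i) = vv i.succ → Function.Bijective (ψneg (ee i)))))
    -- a global section `s = (sV, sE)`
    (sV : ∀ v, SV v) (sE : ∀ e, SE e)
    (hsec : ∀ e, ψpos e (sV (vpos e)) = sE e ∧ ψneg e (sV (vneg e)) = sE e) :
    (∃ δ : ℕ, δ ≤ k ∧ ∀ v : V,
        Submodule.span R {sV v} =
          (IsLocalRing.maximalIdeal R) ^ δ • (⊤ : Submodule R (SV v))) ∧
    (∀ (tV : ∀ v, SV v) (tE : ∀ e, SE e),
        (∀ e, ψpos e (tV (vpos e)) = tE e ∧ ψneg e (tV (vneg e)) = tE e) →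
        tV v₀ = sV v₀ → (∀ v, tV v = sV v) ∧ (∀ e, tE e = sE e)) := by
  classical
  have hk' : (Order.krullDim (Submodule R R)).unbotD 0 = (k : ℕ∞) := hk
  obtain ⟨b⟩ := hcore
  obtain ⟨δ, hδk, hδ0⟩ := aux_core hprin k hk' b (sV v₀)
  constructor
  · refine ⟨δ, hδk, ?_⟩
    set P : V → Prop := fun v =>
      Submodule.span R {sV v} =
        (IsLocalRing.maximalIdeal R) ^ δ • (⊤ : Submodule R (SV v)) with hP
    intro v
    obtain ⟨r, vv, ee, h0, hlast, horient, hbij⟩ := hpath v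
    suffices h : ∀ i : Fin (r + 1), P (vv i) by
      have := h (Fin.last r); rw [hlast] at this; exact this
    intro i
    induction i using Fin.induction with
    | zero =>
      show P (vv 0); rw [h0]; exact hδ0
    | succ i ih =>
      rcases horient i with ⟨h1, h2⟩ | ⟨h1, h2⟩
      · have hPpos : P (vpos (ee i)) := by rw [h1]; exact ih
        have hE : Submodule.span R {sE (ee i)} =
            (IsLocalRing.maximalIdeal R) ^ δ • (⊤ : Submodule R (SE (ee i))) := by
          rw [← (hsec (ee i)).1]
          exact aux_surj_push (ψpos (ee i)) (hψpos (ee i)).surjective _ _ hPpos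
        have hbneg : Function.Bijective (ψneg (ee i)) := (hbij i).2 h2
        have hPneg : P (vneg (ee i)) :=
          aux_bij_pull (ψneg (ee i)) hbneg _ _ (by rw [(hsec (ee i)).2]; exact hE)
        show P (vv i.succ); rw [← h2]; exact hPneg
      · have hPneg : P (vneg (ee i)) := by rw [h2]; exact ih
        have hE : Submodule.span R {sE (ee i)} =
            (IsLocalRing.maximalIdeal R) ^ δ • (⊤ : Submodule R (SE (ee i))) := by
          rw [← (hsec (ee i)).2]
          exact aux_surj_push (ψneg (ee i)) (hψneg (ee i)) _ _ hPneg
        have hbpos : Function.Bijective (ψpos (ee i)) := (hbij i).1 h1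
        have hPpos : P (vpos (ee i)) :=
          aux_bij_pull (ψpos (ee i)) hbpos _ _ (by rw [(hsec (ee i)).1]; exact hE)
        show P (vv i.succ); rw [← h1]; exact hPpos
  · intro tV tE htsec ht0
    have hQ : ∀ v, tV v = sV v := by
      intro v
      obtain ⟨r, vv, ee, h0, hlast, horient, hbij⟩ := hpath v
      suffices h : ∀ i : Fin (r + 1), tV (vv i) = sV (vv i) by
        have := h (Fin.last r); rw [hlast] at this; exact this
      intro i
      induction i using Fin.induction with
      | zero => show tV (vv 0) = sV (vv 0); rw [h0]; exact ht0
      | succ i ih =>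
        rcases horient i with ⟨h1, h2⟩ | ⟨h1, h2⟩
        · have hQpos : tV (vpos (ee i)) = sV (vpos (ee i)) := by rw [h1]; exact ih
          have hEeq : tE (ee i) = sE (ee i) := by
            rw [← (htsec (ee i)).1, ← (hsec (ee i)).1, hQpos]
          have hbneg : Function.Bijective (ψneg (ee i)) := (hbij i).2 h2
          have hQneg : tV (vneg (ee i)) = sV (vneg (ee i)) := by
            apply hbneg.injective
            rw [(htsec (ee i)).2, (hsec (ee i)).2, hEeq]
          show tV (vv i.succ) = sV (vv i.succ); rw [← h2]; exact hQneg
        · have hQneg : tV (vneg (ee i)) = sV (vneg (ee i)) := by rw [h2]; exact ih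
          have hEeq : tE (ee i) = sE (ee i) := by
            rw [← (htsec (ee i)).2, ← (hsec (ee i)).2, hQneg]
          have hbpos : Function.Bijective (ψpos (ee i)) := (hbij i).1 h1
          have hQpos : tV (vpos (ee i)) = sV (vpos (ee i)) := by
            apply hbpos.injective
            rw [(htsec (ee i)).1, (hsec (ee i)).1, hEeq]
          show tV (vv i.succ) = sV (vv i.succ); rw [← h1]; exact hQpos
    refine ⟨hQ, fun e => ?_⟩
    rw [← (htsec e).1, ← (hsec e).1, hQ]
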